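/- (Deterministic version of the sufficient condition for global decomposability) Let Y : [0,∞) → GL(n,ℝ) solve dY_t/dt = A(t) Y_t with Y_0 = I_n, A continuous. Suppose that for all t ≥ 0, all i ∈ {n-k+1,…,n}, and all increasing index sets (l₁ < … < l_k) ≠ (n-k+1,…,n): det^{n-k+1,…,n}_{l₁…l_k}([I : A(t) : i]) · det^{l₁…l_k}_{n-k+1,…,n}(Y_t) = 0. Then det^{n-k+1,…,n}_{n-k+1,…,n}(Y_t) solves the scalar linear ODE u' = c(t)·u with c(t) = Σ_{i=n-k+1}^n det^{n-k+1,…,n}_{n-k+1,…,n}([I : A(t) : i]) and u(0) = 1, and in particular det^{n-k+1,…,n}_{n-k+1,…,n}(Y_t) > 0 for all t ≥ 0. -/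

import Mathlib

attribute [local instance] Matrix.normedAddCommGroup Matrix.normedSpace

open Matrix Finset Equiv

namespace Stmt17Aux

/-- Derivative of the determinant along a path of matrices. -/
lemma hasDerivAt_det {n : ℕ} {N : ℝ → Matrix (Fin n) (Fin n) ℝ}
    {N' : Matrix (Fin n) (Fin n) ℝ} {t : ℝ}
    (h : ∀ i j, HasDerivAt (fun s => N s i j) (N' i j) t) :
    HasDerivAt (fun s => (N s).det)
      (∑ p : Fin n, ((N t).updateRow p (N' p)).det) t := by
  have hterm : ∀ σ : Equiv.Perm (Fin n),
      HasDerivAt (fun s => ((Equiv.Perm.sign σ : ℤ) : ℝ) * ∏ i, N s (σ i) i)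
        (((Equiv.Perm.sign σ : ℤ) : ℝ) *
          ∑ j, (∏ i ∈ Finset.univ.erase j, N t (σ i) i) * N' (σ j) j) t := by
    intro σ
    have hp := HasDerivAt.finset_prod (u := Finset.univ)
      (f := fun i s => N s (σ i) i) (f' := fun i => N' (σ i) i) (fun i _ => h (σ i) i)
    simpa [smul_eq_mul] using hp.const_mul (((Equiv.Perm.sign σ : ℤ) : ℝ))
  have hsum := HasDerivAt.fun_sum (u := Finset.univ)
    (A := fun σ s => ((Equiv.Perm.sign σ : ℤ) : ℝ) * ∏ i, N s (σ i) i)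
    (A' := fun σ => ((Equiv.Perm.sign σ : ℤ) : ℝ) *
      ∑ j, (∏ i ∈ Finset.univ.erase j, N t (σ i) i) * N' (σ j) j)
    (fun σ _ => hterm σ)
  have hfun : (fun s => (N s).det)
      = fun s => ∑ σ : Equiv.Perm (Fin n), ((Equiv.Perm.sign σ : ℤ) : ℝ) * ∏ i, N s (σ i) i := by
    funext s; rw [Matrix.det_apply']
  rw [hfun]
  refine hsum.congr_deriv ?_; symm
  -- equality of the derivative values
  have : ∀ p : Fin n, ((N t).updateRow p (N' p)).det
      = ∑ σ : Equiv.Perm (Fin n), ((Equiv.Perm.sign σ : ℤ) : ℝ) *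
          ∏ i, ((N t).updateRow p (N' p)) (σ i) i := fun p => Matrix.det_apply' _
  simp_rw [this]
  rw [Finset.sum_comm]
  refine Finset.sum_congr rfl fun σ _ => ?_
  rw [Finset.mul_sum]
  rw [← Equiv.sum_comp σ]
  refine Finset.sum_congr rfl fun j _ => ?_
  have hprod : (∏ i, ((N t).updateRow (σ j) (N' (σ j))) (σ i) i)
      = N' (σ j) j * ∏ i ∈ Finset.univ.erase j, N t (σ i) i := by
    rw [← Finset.mul_prod_erase Finset.univ _ (Finset.mem_univ j)]
    congr 1
    · rw [Matrix.updateRow_self]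
    · refine Finset.prod_congr rfl fun i hi => ?_
      have hij : i ≠ j := (Finset.mem_erase.mp hi).1
      rw [Matrix.updateRow_ne (σ.injective.ne hij)]
  rw [hprod]; ring

open Classical in
/-- Cauchy–Binet formula. -/
lemma cauchy_binet {k n : ℕ} (R : Matrix (Fin k) (Fin n) ℝ) (S : Matrix (Fin n) (Fin k) ℝ) :
    (R * S).det = ∑ l ∈ Finset.univ.filter (fun l : Fin k → Fin n => StrictMono l),
      (R.submatrix id l).det * (S.submatrix l id).det := by
  have step1 : (R * S).det
      = ∑ f : Fin k → Fin n, (∏ i, S (f i) i) * (R.submatrix id f).det := by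
    calc (R * S).det
        = ∑ f : Fin k → Fin n, ∑ σ : Equiv.Perm (Fin k),
            ((Equiv.Perm.sign σ : ℤ) : ℝ) * ∏ i, R (σ i) (f i) * S (f i) i := by
          simp only [Matrix.det_apply', Matrix.mul_apply, Finset.prod_univ_sum, Finset.mul_sum,
            Fintype.piFinset_univ]
          rw [Finset.sum_comm]
      _ = ∑ f : Fin k → Fin n, (∏ i, S (f i) i) * (R.submatrix id f).det := by
          refine Finset.sum_congr rfl fun f _ => ?_
          rw [Matrix.det_apply', Finset.mul_sum]
          refine Finset.sum_congr rfl fun σ _ => ?_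
          simp only [Matrix.submatrix_apply, id_eq, Finset.prod_mul_distrib]
          ring
  have step2 : (R * S).det
      = ∑ f ∈ Finset.univ.filter (fun f : Fin k → Fin n => Function.Injective f),
          (∏ i, S (f i) i) * (R.submatrix id f).det := by
    rw [step1]
    symm
    refine Finset.sum_subset (Finset.filter_subset _ _) fun f _ hf => ?_
    have hni : ¬ Function.Injective f := by simpa using hf
    rw [Function.Injective] at hni; push_neg at hni
    obtain ⟨i, j, hfij, hij⟩ := hni
    have : (R.submatrix id f).det = 0 :=
      Matrix.det_zero_of_column_eq hij (fun x => by simp [Matrix.submatrix_apply, hfij])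
    rw [this, mul_zero]
  have step3 : ∀ l : Fin k → Fin n, StrictMono l →
      (∑ σ : Equiv.Perm (Fin k), (∏ i, S ((l ∘ σ) i) i) * (R.submatrix id (l ∘ σ)).det)
        = (R.submatrix id l).det * (S.submatrix l id).det := by
    intro l hl
    have hcol : ∀ σ : Equiv.Perm (Fin k),
        (R.submatrix id (l ∘ σ)).det
          = ((Equiv.Perm.sign σ : ℤ) : ℝ) * (R.submatrix id l).det := by
      intro σ
      have he : R.submatrix id (l ∘ σ) = (R.submatrix id l).submatrix id σ := rfl
      rw [he, Matrix.det_permute']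
    calc (∑ σ : Equiv.Perm (Fin k), (∏ i, S ((l ∘ σ) i) i) * (R.submatrix id (l ∘ σ)).det)
        = (R.submatrix id l).det * ∑ σ : Equiv.Perm (Fin k),
            ((Equiv.Perm.sign σ : ℤ) : ℝ) * ∏ i, (S.submatrix l id) (σ i) i := by
          rw [Finset.mul_sum]
          refine Finset.sum_congr rfl fun σ _ => ?_
          rw [hcol]
          simp only [Matrix.submatrix_apply, id_eq, Function.comp_apply]
          ring
      _ = (R.submatrix id l).det * (S.submatrix l id).det := by rw [← Matrix.det_apply']
  rw [step2]
  have hbij :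
      ∑ x ∈ (Finset.univ.filter (fun l : Fin k → Fin n => StrictMono l)).sigma
          (fun _ => (Finset.univ : Finset (Equiv.Perm (Fin k)))),
        (∏ i, S ((x.1 ∘ x.2) i) i) * (R.submatrix id (x.1 ∘ x.2)).det
      = ∑ f ∈ Finset.univ.filter (fun f : Fin k → Fin n => Function.Injective f),
          (∏ i, S (f i) i) * (R.submatrix id f).det := by
    refine Finset.sum_bij (fun x _ => x.1 ∘ x.2) ?_ ?_ ?_ ?_
    · rintro ⟨l, σ⟩ hx
      have hl : StrictMono l := by
        have := (Finset.mem_sigma.mp hx).1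
        simpa using this
      simp only [Finset.mem_filter, Finset.mem_univ, true_and]
      exact hl.injective.comp σ.injective
    · rintro ⟨l₁, σ₁⟩ hx₁ ⟨l₂, σ₂⟩ hx₂ heq
      have hl₁ : StrictMono l₁ := by simpa using (Finset.mem_sigma.mp hx₁).1
      have hl₂ : StrictMono l₂ := by simpa using (Finset.mem_sigma.mp hx₂).1
      have happ : ∀ a, l₁ (σ₁ a) = l₂ (σ₂ a) := fun a => congrFun heq a
      have hτapp : ∀ a, l₁ a = l₂ (σ₂ (σ₁.symm a)) := fun a => by
        simpa using happ (σ₁.symm a)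
      have hτ : StrictMono (fun a => σ₂ (σ₁.symm a)) := by
        intro a b hab
        have h1 : l₁ a < l₁ b := hl₁ hab
        rw [hτapp a, hτapp b] at h1
        exact hl₂.lt_iff_lt.mp h1
      have hτid : (fun a => σ₂ (σ₁.symm a)) = (id : Fin k → Fin k) := by
        refine (hτ.range_inj strictMono_id).mp ?_
        rw [Set.range_id]
        exact Set.range_eq_univ.mpr fun a => ⟨σ₁ (σ₂.symm a), by simp⟩
      have hσ : σ₁ = σ₂ := by
        ext a
        rw [(show σ₂ a = σ₁ a by simpa using congrFun hτid (σ₁ a))]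
      have hll : l₁ = l₂ := by
        funext a
        rw [hτapp a, congrFun hτid a]
        simp
      subst hσ; subst hll; rfl
    · intro f hf
      have hfinj : Function.Injective f := by simpa using hf
      set s : Finset (Fin n) := Finset.univ.image f with hs_def
      have hs : s.card = k := by
        rw [hs_def, Finset.card_image_of_injective _ hfinj, Finset.card_univ, Fintype.card_fin]
      set l : Fin k → Fin n := fun i => s.orderEmbOfFin hs i with hl_def
      have hl : StrictMono l := (s.orderEmbOfFin hs).strictMono
      have hmem : ∀ j, f j ∈ s := fun j => Finset.mem_image_of_mem f (Finset.mem_univ j)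
      set g : Fin k → Fin k := fun j => (s.orderIsoOfFin hs).symm ⟨f j, hmem j⟩ with hg_def
      have hg : ∀ j, l (g j) = f j := by
        intro j
        rw [hl_def, hg_def]
        simp only
        rw [← Finset.coe_orderIsoOfFin_apply]
        rw [OrderIso.apply_symm_apply]
      have hginj : Function.Injective g := fun a b hab => hfinj (by rw [← hg a, ← hg b, hab])
      refine ⟨⟨l, Equiv.ofBijective g (Finite.injective_iff_bijective.mp hginj)⟩, ?_, ?_⟩
      · rw [Finset.mem_sigma]
        exact ⟨by simpa using hl, Finset.mem_univ _⟩
      · funext j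
        exact hg j
    · rintro ⟨l, σ⟩ _
      rfl
  rw [← hbij, Finset.sum_sigma]
  exact Finset.sum_congr rfl fun l hl => step3 l (by simpa using (Finset.mem_filter.mp hl).2)

end Stmt17Aux

/-- Sufficient condition for global decomposability (deterministic version): if
`Y' = A(t) Y`, `Y 0 = I`, each `Y t` is invertible, and all cross terms
`det^{last k}_{l}([I : A(t) : i]) · det^{l}_{last k}(Y t)` vanish for every increasing
index set `l ≠ (n-k+1,…,n)` and every row `i` among the last `k`, then the lower-right
`k×k` subdeterminant `u t = det^{last k}_{last k}(Y t)` solves the scalar linear ODE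
`u' = c(t) u` with `c(t) = Σ_i det^{last k}_{last k}([I : A(t) : i])`, `u 0 = 1`, and
in particular `u t > 0` for all `t ≥ 0`. -/
theorem stmt17 (m k : ℕ) (A Y : ℝ → Matrix (Fin (m + k)) (Fin (m + k)) ℝ)
    (hA : Continuous A) (hY0 : Y 0 = 1)
    (hY : ∀ t ∈ Set.Ici (0 : ℝ), HasDerivAt Y (A t * Y t) t)
    (hinv : ∀ t ∈ Set.Ici (0 : ℝ), IsUnit (Y t).det)
    (hvanish : ∀ t ∈ Set.Ici (0 : ℝ), ∀ p : Fin k,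
      ∀ l : Fin k → Fin (m + k), StrictMono l → l ≠ Fin.natAdd m →
        ((((1 : Matrix (Fin (m + k)) (Fin (m + k)) ℝ).updateRow (Fin.natAdd m p)
              (A t (Fin.natAdd m p))).submatrix (Fin.natAdd m) l).det) *
          (((Y t).submatrix l (Fin.natAdd m)).det) = 0) :
    (∀ t ∈ Set.Ici (0 : ℝ),
      HasDerivAt (fun s => (((Y s).submatrix (Fin.natAdd m) (Fin.natAdd m)).det))
        ((∑ p : Fin k,
            ((((1 : Matrix (Fin (m + k)) (Fin (m + k)) ℝ).updateRow (Fin.natAdd m p)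
                (A t (Fin.natAdd m p))).submatrix (Fin.natAdd m) (Fin.natAdd m)).det)) *
          (((Y t).submatrix (Fin.natAdd m) (Fin.natAdd m)).det)) t) ∧
    ((Y 0).submatrix (Fin.natAdd m) (Fin.natAdd m)).det = 1 ∧
    (∀ t ∈ Set.Ici (0 : ℝ),
      0 < ((Y t).submatrix (Fin.natAdd m) (Fin.natAdd m)).det) := by
  classical
  set u : ℝ → ℝ := fun s => ((Y s).submatrix (Fin.natAdd m) (Fin.natAdd m)).det with hu_def
  set c : ℝ → ℝ := fun t => ∑ p : Fin k,
      ((((1 : Matrix (Fin (m + k)) (Fin (m + k)) ℝ).updateRow (Fin.natAdd m p)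
        (A t (Fin.natAdd m p))).submatrix (Fin.natAdd m) (Fin.natAdd m)).det) with hc_def
  have hnatinj : Function.Injective (Fin.natAdd m : Fin k → Fin (m + k)) :=
    (Fin.strictMono_natAdd m).injective
  -- Part 1
  have part1 : ∀ t ∈ Set.Ici (0 : ℝ), HasDerivAt u (c t * u t) t := by
    intro t ht
    have hent : ∀ i j : Fin (m + k),
        HasDerivAt (fun s => Y s i j) ((A t * Y t) i j) t := by
      intro i j
      exact (hasDerivAt_pi.mp ((hasDerivAt_pi (φ := Y)).mp (hY t ht) i)) j
    have hN : ∀ i j : Fin k,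
        HasDerivAt (fun s => (Y s).submatrix (Fin.natAdd m) (Fin.natAdd m) i j)
          (((A t * Y t).submatrix (Fin.natAdd m) (Fin.natAdd m)) i j) t :=
      fun i j => hent _ _
    have hdet := Stmt17Aux.hasDerivAt_det hN
    have hkey : (∑ p : Fin k,
        (((Y t).submatrix (Fin.natAdd m) (Fin.natAdd m)).updateRow p
          ((A t * Y t).submatrix (Fin.natAdd m) (Fin.natAdd m) p)).det) = c t * u t := by
      have hterm : ∀ p : Fin k,
          (((Y t).submatrix (Fin.natAdd m) (Fin.natAdd m)).updateRow p
            ((A t * Y t).submatrix (Fin.natAdd m) (Fin.natAdd m) p)).det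
          = ((((1 : Matrix (Fin (m + k)) (Fin (m + k)) ℝ).updateRow (Fin.natAdd m p)
              (A t (Fin.natAdd m p))).submatrix (Fin.natAdd m) (Fin.natAdd m)).det) * u t := by
        intro p
        set B : Matrix (Fin (m + k)) (Fin (m + k)) ℝ :=
          (1 : Matrix (Fin (m + k)) (Fin (m + k)) ℝ).updateRow (Fin.natAdd m p)
            (A t (Fin.natAdd m p)) with hB_def
        have hBY : ((Y t).submatrix (Fin.natAdd m) (Fin.natAdd m)).updateRow p
            ((A t * Y t).submatrix (Fin.natAdd m) (Fin.natAdd m) p)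
            = (B.submatrix (Fin.natAdd m) id) * ((Y t).submatrix id (Fin.natAdd m)) := by
          ext i j
          by_cases hip : i = p
          · subst hip
            rw [Matrix.updateRow_self]
            simp only [Matrix.mul_apply, Matrix.submatrix_apply, id_eq, hB_def,
              Matrix.updateRow_self]
          · rw [Matrix.updateRow_ne hip]
            simp only [Matrix.mul_apply, Matrix.submatrix_apply, id_eq, hB_def]
            have hne : Fin.natAdd m i ≠ Fin.natAdd m p := fun h => hip (hnatinj h)
            simp only [Matrix.updateRow_ne hne]
            have : ∑ l, (1 : Matrix (Fin (m + k)) (Fin (m + k)) ℝ) (Fin.natAdd m i) l *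
                Y t l (Fin.natAdd m j)
                = ((1 : Matrix (Fin (m + k)) (Fin (m + k)) ℝ) * Y t)
                  (Fin.natAdd m i) (Fin.natAdd m j) := (Matrix.mul_apply).symm
            rw [this, Matrix.one_mul]
        rw [hBY, Stmt17Aux.cauchy_binet]
        rw [Finset.sum_eq_single (Fin.natAdd m : Fin k → Fin (m + k))]
        · simp only [Matrix.submatrix_submatrix, Function.comp_id, Function.id_comp]; rfl
        · intro l hl hlne
          have hlsm : StrictMono l := by simpa using (Finset.mem_filter.mp hl).2
          have := hvanish t ht p l hlsm hlne
          simpa only [Matrix.submatrix_submatrix, Function.comp_id, Function.id_comp] using this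
        · intro hnot
          exact absurd (Finset.mem_filter.mpr ⟨Finset.mem_univ _, Fin.strictMono_natAdd m⟩) hnot
      rw [hc_def]
      simp only
      rw [Finset.sum_mul]
      exact Finset.sum_congr rfl fun p _ => hterm p
    rw [← hkey]
    exact hdet
  -- Part 2
  have part2 : u 0 = 1 := by
    rw [hu_def]
    simp only [hY0]
    rw [Matrix.submatrix_one _ hnatinj, Matrix.det_one]
  refine ⟨part1, part2, ?_⟩
  -- Part 3
  have hc : Continuous c := by
    refine continuous_finset_sum _ fun p _ => Continuous.matrix_det ?_
    refine Continuous.matrix_submatrix ?_ _ _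
    refine Continuous.matrix_updateRow _ continuous_const ?_
    exact (continuous_apply (Fin.natAdd m p)).comp hA
  set F : ℝ → ℝ := fun t => ∫ s in (0:ℝ)..t, c s with hF_def
  have hF : ∀ t : ℝ, HasDerivAt F (c t) t := fun t =>
    (hc.integral_hasStrictDerivAt 0 t).hasDerivAt
  set v : ℝ → ℝ := fun t => u t * Real.exp (-F t) with hv_def
  have hv : ∀ x ∈ Set.Ici (0 : ℝ), HasDerivAt v 0 x := by
    intro x hx
    have h1 := part1 x hx
    have h2 : HasDerivAt (fun s => Real.exp (-F s)) (Real.exp (-F x) * (-c x)) x :=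
      ((hF x).neg).exp
    have := h1.fun_mul h2
    refine this.congr_deriv ?_; symm
    ring
  have hconst : ∀ t ∈ Set.Ici (0 : ℝ), v t = v 0 := by
    intro t ht
    have ht0 : (0 : ℝ) ≤ t := ht
    have hcont : ContinuousOn v (Set.Icc 0 t) := fun x hx =>
      ((hv x hx.1).continuousAt).continuousWithinAt
    have hderiv : ∀ x ∈ Set.Ico (0 : ℝ) t, HasDerivWithinAt v 0 (Set.Ici x) x := fun x hx =>
      (hv x hx.1).hasDerivWithinAt
    exact constant_of_has_deriv_right_zero hcont hderiv t (Set.right_mem_Icc.mpr ht0)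
  have hv0 : v 0 = 1 := by
    rw [hv_def]
    simp only
    rw [part2, hF_def]
    simp [intervalIntegral.integral_same]
  intro t ht
  have hvt : u t * Real.exp (-F t) = 1 := by
    have := hconst t ht
    rw [hv0] at this
    exact this
  have hexp : (0 : ℝ) < Real.exp (-F t) := Real.exp_pos _
  nlinarith [hvt, hexp, mul_pos hexp hexp]
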